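/- Let N : (0,1) → ℝ be differentiable, K ≥ 1, C₀ > 0, and let f : (0,1) → (0,∞) be continuous with ∫₀¹ f(t)/t dt < ∞. If N'(r) ≥ −C₀( (f(r)/r) N(r) + K r + K f(r)/r ) for all r ∈ (0,1), then there exists a constant C̄ (depending only on C₀) such that the function r ↦ e^{C̄ ∫₀^r f(t)/t dt} ( N(r) + C̄ K ( r² + ∫₀^r f(t)/t dt ) ) is monotone nondecreasing on (0,1). -/

import Mathlib

open MeasureTheory

theorem frequency_monotonicity_lemma (C₀ : ℝ) (hC₀ : 0 < C₀) :
    ∃ Cbar : ℝ, 0 < Cbar ∧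
      ∀ (K : ℝ), 1 ≤ K →
      ∀ (N f : ℝ → ℝ),
        (∀ r ∈ Set.Ioo (0:ℝ) 1, DifferentiableAt ℝ N r) →
        ContinuousOn f (Set.Ioo 0 1) →
        (∀ t ∈ Set.Ioo (0:ℝ) 1, 0 < f t) →
        IntegrableOn (fun t => f t / t) (Set.Ioo 0 1) →
        (∀ r ∈ Set.Ioo (0:ℝ) 1,
          deriv N r ≥ -C₀ * ((f r / r) * N r + K * r + K * (f r / r))) →
        MonotoneOn (fun r =>
          Real.exp (Cbar * ∫ t in Set.Ioo 0 r, f t / t) *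
            (N r + Cbar * K * (r^2 + ∫ t in Set.Ioo 0 r, f t / t)))
          (Set.Ioo 0 1) := by
  refine ⟨C₀, hC₀, ?_⟩
  intro K hK N f hN hf hfpos hfint hineq
  set F : ℝ → ℝ := fun r => ∫ t in Set.Ioo 0 r, f t / t with hFdef
  have hFI : ∀ r ∈ Set.Ioo (0:ℝ) 1, F r = ∫ t in (0:ℝ)..r, f t / t := by
    intro r hr
    rw [intervalIntegral.integral_of_le hr.1.le,
      MeasureTheory.integral_Ioc_eq_integral_Ioo]
  have hgc : ContinuousOn (fun t => f t / t) (Set.Ioo 0 1) :=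
    hf.div continuousOn_id (fun t ht => ne_of_gt ht.1)
  have hFd : ∀ r ∈ Set.Ioo (0:ℝ) 1, HasDerivAt F (f r / r) r := by
    intro r hr
    have hsub : Set.Ioc (0:ℝ) r ⊆ Set.Ioo 0 1 :=
      fun t ht => ⟨ht.1, lt_of_le_of_lt ht.2 hr.2⟩
    have hint : IntervalIntegrable (fun t => f t / t) volume 0 r := by
      rw [intervalIntegrable_iff_integrableOn_Ioc_of_le hr.1.le]
      exact hfint.mono_set hsub
    have hmeas : StronglyMeasurableAtFilter (fun t => f t / t) (nhds r) volume :=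
      ⟨Set.Ioo 0 1, isOpen_Ioo.mem_nhds hr,
        hgc.aestronglyMeasurable measurableSet_Ioo⟩
    have hcont : ContinuousAt (fun t => f t / t) r :=
      hgc.continuousAt (isOpen_Ioo.mem_nhds hr)
    have h := intervalIntegral.integral_hasDerivAt_right hint hmeas hcont
    refine h.congr_of_eventuallyEq ?_
    filter_upwards [isOpen_Ioo.mem_nhds hr] with x hx
    exact hFI x hx
  have hFnonneg : ∀ r ∈ Set.Ioo (0:ℝ) 1, 0 ≤ F r := by
    intro r hr
    refine setIntegral_nonneg measurableSet_Ioo (fun t ht => ?_)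
    have ht1 : t ∈ Set.Ioo (0:ℝ) 1 := ⟨ht.1, lt_trans ht.2 hr.2⟩
    exact div_nonneg (hfpos t ht1).le ht.1.le
  have hGd : ∀ r ∈ Set.Ioo (0:ℝ) 1, HasDerivAt
      (fun r => Real.exp (C₀ * F r) * (N r + C₀ * K * (r^2 + F r)))
      (Real.exp (C₀ * F r) * ((C₀ * (f r / r)) * (N r + C₀ * K * (r^2 + F r))
        + (deriv N r + C₀ * K * (2*r + f r / r)))) r := by
    intro r hr
    have hF' := hFd r hr
    have hN' := (hN r hr).hasDerivAt
    have h1 : HasDerivAt (fun r => Real.exp (C₀ * F r))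
        (Real.exp (C₀ * F r) * (C₀ * (f r / r))) r := (hF'.const_mul C₀).exp
    have hr2 : HasDerivAt (fun r : ℝ => r^2) (2*r) r := by
      simpa [mul_comm] using (hasDerivAt_pow 2 r)
    have h2 : HasDerivAt (fun r => N r + C₀ * K * (r^2 + F r))
        (deriv N r + C₀ * K * (2*r + f r / r)) r :=
      hN'.add ((hr2.add hF').const_mul (C₀ * K))
    have h := h1.mul h2
    refine h.congr_deriv ?_
    ring
  have key : MonotoneOn (fun r => Real.exp (C₀ * F r) * (N r + C₀ * K * (r^2 + F r)))
      (Set.Ioo 0 1) := by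
    have hdiff : DifferentiableOn ℝ
        (fun r => Real.exp (C₀ * F r) * (N r + C₀ * K * (r^2 + F r)))
        (Set.Ioo 0 1) :=
      fun r hr => ((hGd r hr).differentiableAt).differentiableWithinAt
    apply monotoneOn_of_deriv_nonneg (convex_Ioo 0 1) hdiff.continuousOn
    · rw [interior_Ioo]; exact hdiff
    · rw [interior_Ioo]
      intro r hr
      rw [(hGd r hr).deriv]
      have hexp : 0 < Real.exp (C₀ * F r) := Real.exp_pos _
      refine mul_nonneg hexp.le ?_
      have hg : 0 ≤ f r / r := div_nonneg (hfpos r hr).le hr.1.le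
      have hineq' := hineq r hr
      have hFnn := hFnonneg r hr
      have hK0 : (0:ℝ) < K := lt_of_lt_of_le one_pos hK
      have hr0 : (0:ℝ) < r := hr.1
      have hterm1 : 0 ≤ C₀ * C₀ * K * (f r / r) * (r^2 + F r) := by
        positivity
      have hterm2 : 0 ≤ C₀ * K * r := by positivity
      nlinarith [hineq', hterm1, hterm2]
  exact key
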